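/- Let P₁, P₂ : M → 𝕊ⁿ₊₊ be maps from a finite set M = {1,…,m₀} into the positive definite symmetric n×n matrices, let Λ = (λ_{ιȷ}) be a matrix of reals with λ_{ιȷ} > 0 for ι ≠ ȷ and each row summing to 0, and define Λ[P](ι) = Σ_ȷ λ_{ιȷ} P(ȷ). Suppose A₁, A₂, C₁, C₂ : M → ℝⁿˣⁿ satisfy, for all ι ∈ M: Λ[P₁](ι) + A₁(ι)⊤P₁(ι) + P₁(ι)A₁(ι) + C₁(ι)⊤P₁(ι)C₁(ι) < 0 and Λ[P₂](ι) + A₂(ι)⊤P₂(ι) + P₂(ι)A₂(ι) < 0. Then there exist positive definite maps Q₁, Q₂ : M → 𝕊ⁿ₊₊ and ε > 0 such that for all ι ∈ M: Λ[Q₁](ι) + A₁(ι)⊤Q₁(ι) + Q₁(ι)A₁(ι) + C₁(ι)⊤Q₁(ι)C₁(ι) ≤ −εQ₁(ι) and Λ[Q₂](ι) + A₂(ι)⊤Q₂(ι) + Q₂(ι)A₂(ι) + C₂(ι)⊤Q₁(ι)C₂(ι) ≤ −εQ₂(ι). -/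

import Mathlib

open Matrix

private lemma herm_smul {n : ℕ} {M : Matrix (Fin n) (Fin n) ℝ} (h : M.IsHermitian) (c : ℝ) :
    (c • M).IsHermitian := by
  unfold Matrix.IsHermitian at h ⊢
  rw [conjTranspose_smul, h, star_trivial]

private lemma psd_smul {n : ℕ} {M : Matrix (Fin n) (Fin n) ℝ} (h : M.PosSemidef) {c : ℝ}
    (hc : 0 ≤ c) : (c • M).PosSemidef := by
  refine PosSemidef.of_dotProduct_mulVec_nonneg (herm_smul h.1 c) fun x => ?_
  rw [smul_mulVec, dotProduct_smul, smul_eq_mul]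
  exact mul_nonneg hc (h.dotProduct_mulVec_nonneg x)

private lemma pd_smul {n : ℕ} {M : Matrix (Fin n) (Fin n) ℝ} (h : M.PosDef) {c : ℝ}
    (hc : 0 < c) : (c • M).PosDef := by
  refine PosDef.of_dotProduct_mulVec_pos (herm_smul h.1 c) fun x hx => ?_
  rw [smul_mulVec, dotProduct_smul, smul_eq_mul]
  exact mul_pos hc (h.dotProduct_mulVec_pos hx)

private lemma pd_sub_mono {n : ℕ} {S M : Matrix (Fin n) (Fin n) ℝ} (hM : M.PosSemidef) {ε δ : ℝ}
    (hδε : δ ≤ ε) (h : (S - ε • M).PosDef) : (S - δ • M).PosDef := by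
  have e : S - δ • M = (S - ε • M) + (ε - δ) • M := by module
  rw [e]
  exact h.add_posSemidef (psd_smul hM (by linarith))

private lemma key {n : ℕ} {S M : Matrix (Fin n) (Fin n) ℝ} (hS : S.PosDef) (hM : M.PosSemidef) :
    ∃ ε : ℝ, 0 < ε ∧ (S - ε • M).PosDef := by
  rcases Nat.eq_zero_or_pos n with h0 | hn
  · subst h0
    exact ⟨1, one_pos, hS.1.sub (herm_smul hM.1 1), fun x hx =>
      absurd (Subsingleton.elim x 0) hx⟩
  · haveI : Nonempty (Fin n) := ⟨⟨0, hn⟩⟩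
    set f : (Fin n → ℝ) → ℝ := fun x => dotProduct (star x) (S *ᵥ x) with hf
    set g : (Fin n → ℝ) → ℝ := fun x => dotProduct (star x) (M *ᵥ x) with hg
    have hfc : Continuous f :=
      (continuous_star.comp continuous_id).dotProduct
        (continuous_const.matrix_mulVec continuous_id)
    have hgc : Continuous g :=
      (continuous_star.comp continuous_id).dotProduct
        (continuous_const.matrix_mulVec continuous_id)
    have hne : (Metric.sphere (0 : Fin n → ℝ) 1).Nonempty :=
      NormedSpace.sphere_nonempty.mpr zero_le_one
    obtain ⟨u, hu, hmin⟩ :=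
      (isCompact_sphere (0 : Fin n → ℝ) 1).exists_isMinOn hne hfc.continuousOn
    obtain ⟨v, hv, hmax⟩ :=
      (isCompact_sphere (0 : Fin n → ℝ) 1).exists_isMaxOn hne hgc.continuousOn
    have hu0 : u ≠ 0 := by
      intro h; rw [mem_sphere_zero_iff_norm, h, norm_zero] at hu; exact one_ne_zero hu.symm
    have ha : 0 < f u := hS.dotProduct_mulVec_pos hu0
    have hb : 0 ≤ g v := hM.dotProduct_mulVec_nonneg v
    set a := f u
    set b := g v
    refine ⟨a / (b + 1), by positivity,
      PosDef.of_dotProduct_mulVec_pos (hS.1.sub (herm_smul hM.1 _)) fun x hx => ?_⟩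
    rw [sub_mulVec, dotProduct_sub, smul_mulVec, dotProduct_smul, smul_eq_mul]
    have hc : (0:ℝ) < ‖x‖ := norm_pos_iff.mpr hx
    set y := ‖x‖⁻¹ • x with hy
    have hys : y ∈ Metric.sphere (0 : Fin n → ℝ) 1 := by
      rw [mem_sphere_zero_iff_norm, hy, norm_smul, norm_inv, norm_norm, inv_mul_cancel₀ hc.ne']
    have hfy : f y = ‖x‖⁻¹ * (‖x‖⁻¹ * f x) := by
      simp only [hf, hy, star_smul, smul_dotProduct, mulVec_smul, dotProduct_smul,
        smul_eq_mul, star_trivial]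
    have hgy : g y = ‖x‖⁻¹ * (‖x‖⁻¹ * g x) := by
      simp only [hg, hy, star_smul, smul_dotProduct, mulVec_smul, dotProduct_smul,
        smul_eq_mul, star_trivial]
    have hfx : f x = ‖x‖ * (‖x‖ * f y) := by rw [hfy]; field_simp
    have hgx : g x = ‖x‖ * (‖x‖ * g y) := by rw [hgy]; field_simp
    have h1 : a ≤ f y := hmin hys
    have h2 : g y ≤ b := hmax hys
    have hε : a / (b + 1) * (b + 1) = a := div_mul_cancel₀ a (by positivity)
    have hεpos : 0 < a / (b + 1) := by positivity
    show 0 < f x - a / (b + 1) * g x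
    rw [hfx, hgx]
    nlinarith [mul_pos (mul_pos hc hc) hεpos, mul_le_mul_of_nonneg_left h2 hεpos.le,
      mul_le_mul_of_nonneg_left h1 (mul_pos hc hc).le]

private lemma global {m : ℕ} (p : Fin m → ℝ → Prop)
    (h : ∀ a, ∃ ε, 0 < ε ∧ p a ε)
    (mono : ∀ a ε δ, 0 < δ → δ ≤ ε → p a ε → p a δ) :
    ∃ ε, 0 < ε ∧ ∀ a, p a ε := by
  choose f hf hp using h
  by_cases hm : m = 0
  · subst hm; exact ⟨1, one_pos, fun a => a.elim0⟩
  · haveI : Nonempty (Fin m) := ⟨⟨0, Nat.pos_of_ne_zero hm⟩⟩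
    have hpos : 0 < Finset.univ.inf' Finset.univ_nonempty f :=
      (Finset.lt_inf'_iff _).mpr fun b _ => hf b
    exact ⟨_, hpos, fun a =>
      mono a (f a) _ hpos (Finset.inf'_le f (Finset.mem_univ a)) (hp a)⟩

/-- Lyapunov-type inequalities: strict negative definiteness (5.2-form) implies the
ε-dissipative form (5.3-form) for possibly rescaled positive definite solutions. -/
theorem stmt3 {n m₀ : ℕ}
    (lam : Fin m₀ → Fin m₀ → ℝ)
    (hlam_pos : ∀ i j, i ≠ j → 0 < lam i j)
    (hlam_sum : ∀ i, ∑ j, lam i j = 0)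
    (P₁ P₂ A₁ A₂ C₁ C₂ : Fin m₀ → Matrix (Fin n) (Fin n) ℝ)
    (hP₁symm : ∀ i, (P₁ i).IsSymm) (hP₂symm : ∀ i, (P₂ i).IsSymm)
    (hP₁ : ∀ i, (P₁ i).PosDef) (hP₂ : ∀ i, (P₂ i).PosDef)
    (h1 : ∀ i, ((-(∑ j, lam i j • P₁ j))
        - ((A₁ i)ᵀ * P₁ i + P₁ i * A₁ i + (C₁ i)ᵀ * P₁ i * C₁ i)).PosDef)
    (h2 : ∀ i, ((-(∑ j, lam i j • P₂ j))
        - ((A₂ i)ᵀ * P₂ i + P₂ i * A₂ i)).PosDef) :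
    ∃ (Q₁ Q₂ : Fin m₀ → Matrix (Fin n) (Fin n) ℝ) (ε : ℝ), 0 < ε ∧
      (∀ i, (Q₁ i).IsSymm) ∧ (∀ i, (Q₂ i).IsSymm) ∧
      (∀ i, (Q₁ i).PosDef) ∧ (∀ i, (Q₂ i).PosDef) ∧
      (∀ i, ((-(ε • Q₁ i)) - ((∑ j, lam i j • Q₁ j)
          + (A₁ i)ᵀ * Q₁ i + Q₁ i * A₁ i + (C₁ i)ᵀ * Q₁ i * C₁ i)).PosSemidef) ∧
      (∀ i, ((-(ε • Q₂ i)) - ((∑ j, lam i j • Q₂ j)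
          + (A₂ i)ᵀ * Q₂ i + Q₂ i * A₂ i + (C₂ i)ᵀ * Q₁ i * C₂ i)).PosSemidef) := by
  set S₁ : Fin m₀ → Matrix (Fin n) (Fin n) ℝ := fun i =>
    (-(∑ j, lam i j • P₁ j)) - ((A₁ i)ᵀ * P₁ i + P₁ i * A₁ i + (C₁ i)ᵀ * P₁ i * C₁ i) with hS₁
  set S₂ : Fin m₀ → Matrix (Fin n) (Fin n) ℝ := fun i =>
    (-(∑ j, lam i j • P₂ j)) - ((A₂ i)ᵀ * P₂ i + P₂ i * A₂ i) with hS₂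
  set M₂ : Fin m₀ → Matrix (Fin n) (Fin n) ℝ := fun i => (C₂ i)ᵀ * P₁ i * C₂ i with hM₂
  have hM₂psd : ∀ i, (M₂ i).PosSemidef := fun i => by
    have := (hP₁ i).posSemidef.conjTranspose_mul_mul_same (C₂ i)
    rwa [conjTranspose_eq_transpose_of_trivial] at this
  -- choose the scaling factor l for Q₁
  obtain ⟨l, hl, hl2⟩ := global (fun i t => (S₂ i - t • M₂ i).PosDef)
    (fun i => key (h2 i) (hM₂psd i))
    (fun i ε δ hδ hδε hp => pd_sub_mono (hM₂psd i) hδε hp)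
  -- choose ε₁ for the first family
  obtain ⟨ε₁, hε₁, hE1⟩ := global (fun i t => (S₁ i - t • P₁ i).PosDef)
    (fun i => key (h1 i) (hP₁ i).posSemidef)
    (fun i ε δ hδ hδε hp => pd_sub_mono (hP₁ i).posSemidef hδε hp)
  -- choose ε₂ for the second family
  obtain ⟨ε₂, hε₂, hE2⟩ := global (fun i t => ((S₂ i - l • M₂ i) - t • P₂ i).PosDef)
    (fun i => key (hl2 i) (hP₂ i).posSemidef)
    (fun i ε δ hδ hδε hp => pd_sub_mono (hP₂ i).posSemidef hδε hp)
  refine ⟨fun i => l • P₁ i, P₂, min ε₁ ε₂, lt_min hε₁ hε₂, ?_, hP₂symm, ?_, hP₂, ?_, ?_⟩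
  · intro i
    unfold Matrix.IsSymm
    rw [transpose_smul, hP₁symm i]
  · exact fun i => pd_smul (hP₁ i) hl
  · intro i
    have hpd : (S₁ i - min ε₁ ε₂ • P₁ i).PosDef :=
      pd_sub_mono (hP₁ i).posSemidef (min_le_left ε₁ ε₂) (hE1 i)
    have e : (-(min ε₁ ε₂ • l • P₁ i)) - ((∑ j, lam i j • l • P₁ j)
        + (A₁ i)ᵀ * (l • P₁ i) + (l • P₁ i) * A₁ i + (C₁ i)ᵀ * (l • P₁ i) * C₁ i)
        = l • (S₁ i - min ε₁ ε₂ • P₁ i) := by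
      simp only [hS₁, mul_smul_comm, smul_mul_assoc, smul_smul, smul_sub, smul_neg,
        Finset.smul_sum, smul_comm l]
      module
    rw [e]
    exact psd_smul hpd.posSemidef hl.le
  · intro i
    have hpd : ((S₂ i - l • M₂ i) - min ε₁ ε₂ • P₂ i).PosDef :=
      pd_sub_mono (hP₂ i).posSemidef (min_le_right ε₁ ε₂) (hE2 i)
    have e : (-(min ε₁ ε₂ • P₂ i)) - ((∑ j, lam i j • P₂ j)
        + (A₂ i)ᵀ * P₂ i + P₂ i * A₂ i + (C₂ i)ᵀ * (l • P₁ i) * C₂ i)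
        = (S₂ i - l • M₂ i) - min ε₁ ε₂ • P₂ i := by
      simp only [hS₂, hM₂, mul_smul_comm, smul_mul_assoc]
      module
    rw [e]
    exact hpd.posSemidef
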